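/- Let A_{ij} be abelian groups for 1 ≤ i < j ≤ 4, let Q_i = (M_i, H_i, Δ_i) be odd form groups for 1 ≤ i ≤ 4, let μ_{ijk} : A_{ij} × A_{jk} → A_{ik} be biadditive maps for all 1 ≤ i < j < k ≤ 4, let (α_{ij}, β_{ij}, γ_{ij}) : Q_i × A_{ij} → Q_j be sesquiquadratic maps of odd form groups for all 1 ≤ i < j ≤ 4 except (i, j) = (2, 4), and let (α_{24}, β_{24}) : (M₂, H₂) × A_{24} → (M₄, H₄) be a sesquiquadratic map of hermitian groups. Suppose that the odd form parameter Δ₂ is generated by the image of γ₁₂ (i.e. Δ₂ is generated as a group by φ(H₂) together with the image of γ₁₂), that A_{24} is generated by the elements μ_{234}(b, c), and that all possible associative laws hold (including μ_{134}(μ_{123}(a, b), c) = μ_{124}(a, μ_{234}(b, c)) and the associative laws for the given sesquiquadratic maps and biadditive maps). Then (α_{24}, β_{24}) can be completed to a unique sesquiquadratic map of odd form groups (α_{24}, β_{24}, γ_{24}) : Q₂ × A_{24} → Q₄ satisfying the remaining associative laws γ_{24}(γ_{12}(u, a), b) = γ_{14}(u, μ_{124}(a, b)) and γ_{34}(γ_{23}(u,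 a), b) = γ_{24}(u, μ_{234}(a, b)). -/

import Mathlib

/-- A hermitian group `(M, H)`: abelian groups with an involution on `H` and a
biadditive pairing `M × M → H` compatible with the involution. -/
structure HermitianGroup (M H : Type) [AddCommGroup M] [AddCommGroup H] where
  bar : H → H
  bar_add : ∀ h h', bar (h + h') = bar h + bar h'
  bar_bar : ∀ h, bar (bar h) = h
  pair : M → M → H
  pair_add_left : ∀ m m' n, pair (m + m') n = pair m n + pair m' n
  pair_add_right : ∀ m n n', pair m (n + n') = pair m n + pair m n'
  bar_pair : ∀ m m', bar (pair m m') = pair m' m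

/-- An odd form group `(M, H, Δ)` over a hermitian group `(M, H)`. -/
structure OddFormGroupStr {M H : Type} [AddCommGroup M] [AddCommGroup H]
    (hg : HermitianGroup M H) (Δ : Type) [AddGroup Δ] where
  φ : H → Δ
  π : Δ → M
  ρ : Δ → H
  φ_plus_bar : ∀ h, φ (h + hg.bar h) = 0
  φ_add : ∀ h h', φ (h + h') = φ h + φ h'
  φ_pair : ∀ m, φ (hg.pair m m) = 0
  π_φ : ∀ h, π (φ h) = 0
  ρ_φ : ∀ h, ρ (φ h) = h - hg.bar h
  π_add : ∀ u v, π (u + v) = π u + π v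
  ρ_add : ∀ u v, ρ (u + v) = ρ u - hg.pair (π u) (π v) + ρ v
  add_comm' : ∀ u v, u + v = v + u - φ (hg.pair (π u) (π v))
  ρ_bar : ∀ u, ρ u + hg.pair (π u) (π u) + hg.bar (ρ u) = 0

/-- A sesquiquadratic map of hermitian groups `(M₁,H₁) × N → (M₂,H₂)`. -/
structure SqHermStr {M₁ H₁ M₂ H₂ : Type} [AddCommGroup M₁] [AddCommGroup H₁]
    [AddCommGroup M₂] [AddCommGroup H₂]
    (hg₁ : HermitianGroup M₁ H₁) (hg₂ : HermitianGroup M₂ H₂)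
    (N : Type) [AddCommGroup N] where
  α : M₁ → N → M₂
  β : N → H₁ → N → H₂
  α_add_left : ∀ m m' n, α (m + m') n = α m n + α m' n
  α_add_right : ∀ m n n', α m (n + n') = α m n + α m n'
  β_add₁ : ∀ n n' h n'', β (n + n') h n'' = β n h n'' + β n' h n''
  β_add₂ : ∀ n h h' n', β n (h + h') n' = β n h n' + β n h' n'
  β_add₃ : ∀ n h n' n'', β n h (n' + n'') = β n h n' + β n h n''
  bar_β : ∀ n h n', hg₂.bar (β n h n') = β n' (hg₁.bar h) n
  pair_α : ∀ m n m' n', hg₂.pair (α m n) (α m' n') = β n (hg₁.pair m m') n'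

/-- A sesquiquadratic map of odd form groups `(M₁,H₁,Δ₁) × N → (M₂,H₂,Δ₂)`. -/
structure SqOFG {M₁ H₁ M₂ H₂ : Type} [AddCommGroup M₁] [AddCommGroup H₁]
    [AddCommGroup M₂] [AddCommGroup H₂]
    {hg₁ : HermitianGroup M₁ H₁} {hg₂ : HermitianGroup M₂ H₂}
    {Δ₁ Δ₂ : Type} [AddGroup Δ₁] [AddGroup Δ₂]
    (ofg₁ : OddFormGroupStr hg₁ Δ₁) (ofg₂ : OddFormGroupStr hg₂ Δ₂)
    (N : Type) [AddCommGroup N] extends SqHermStr hg₁ hg₂ N where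
  γ : Δ₁ → N → Δ₂
  π_γ : ∀ u n, ofg₂.π (γ u n) = α (ofg₁.π u) n
  γ_φ : ∀ h n, γ (ofg₁.φ h) n = ofg₂.φ (β n h n)
  γ_add : ∀ u u' n, γ (u + u') n = γ u n + γ u' n
  ρ_γ : ∀ u n, ofg₂.ρ (γ u n) = β n (ofg₁.ρ u) n
  γ_add_right : ∀ u n n', γ u (n + n') = γ u n + ofg₂.φ (β n' (ofg₁.ρ u) n) + γ u n'

/-- `x` has the expression `φ h ∔ ∑ kᵢ·uᵢ` (sum taken along the list `l`). -/
def FreeOFGExpr {M H : Type} [AddCommGroup M] [AddCommGroup H]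
    {hg : HermitianGroup M H} {Δ : Type} [AddGroup Δ]
    (ofg : OddFormGroupStr hg Δ) {I : Type} (u : I → Δ)
    (x : Δ) (h : H) (k : I → ℤ) (l : List I) : Prop :=
  l.Nodup ∧ (∀ i, i ∉ l → k i = 0) ∧
    x = ofg.φ h + (l.map fun i => k i • u i).sum
section AuxMaps

private lemma addmap_zero {B C : Type} [AddGroup B] [AddGroup C] (f : B → C)
    (hf : ∀ a b, f (a + b) = f a + f b) : f 0 = 0 := by
  have h := hf 0 0
  rw [add_zero] at h
  exact (right_eq_add.mp h)

private lemma addmap_neg {B C : Type} [AddGroup B] [AddGroup C] (f : B → C)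
    (hf : ∀ a b, f (a + b) = f a + f b) (b : B) : f (-b) = - f b := by
  have h := hf b (-b)
  rw [add_neg_cancel, addmap_zero f hf] at h
  exact eq_neg_of_add_eq_zero_right h.symm

private def graphOf {A B : Type} [AddGroup A] [AddGroup B] (f : A →+ B) :
    AddSubgroup (A × B) where
  carrier := {p | p.2 = f p.1}
  add_mem' := by
    rintro ⟨a, b⟩ ⟨c, d⟩ (h1 : b = f a) (h2 : d = f c)
    show b + d = f (a + c)
    rw [map_add, h1, h2]
  zero_mem' := by
    show (0 : B) = f 0
    rw [map_zero]
  neg_mem' := by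
    rintro ⟨a, b⟩ (h : b = f a)
    show -b = f (-a)
    rw [map_neg, h]

private lemma mem_graphOf {A B : Type} [AddGroup A] [AddGroup B] (f : A →+ B)
    (p : A × B) : p ∈ graphOf f ↔ p.2 = f p.1 := Iff.rfl

end AuxMaps

section AuxHerm

variable {M H : Type} [AddCommGroup M] [AddCommGroup H] {hg : HermitianGroup M H}
  {Δ : Type} [AddGroup Δ]

private lemma hg_bar_zero (hg : HermitianGroup M H) : hg.bar 0 = 0 :=
  addmap_zero hg.bar hg.bar_add

private lemma hg_bar_neg (hg : HermitianGroup M H) (h : H) : hg.bar (-h) = -hg.bar h :=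
  addmap_neg hg.bar hg.bar_add h

private lemma hg_pair_zero_left (hg : HermitianGroup M H) (m : M) : hg.pair 0 m = 0 :=
  addmap_zero (fun x => hg.pair x m) (fun a b => hg.pair_add_left a b m)

private lemma hg_pair_zero_right (hg : HermitianGroup M H) (m : M) : hg.pair m 0 = 0 :=
  addmap_zero (fun x => hg.pair m x) (fun a b => hg.pair_add_right m a b)

private lemma hg_pair_neg_left (hg : HermitianGroup M H) (m m' : M) :
    hg.pair (-m) m' = -hg.pair m m' :=
  addmap_neg (fun x => hg.pair x m') (fun a b => hg.pair_add_left a b m') m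

private lemma hg_pair_neg_right (hg : HermitianGroup M H) (m m' : M) :
    hg.pair m (-m') = -hg.pair m m' :=
  addmap_neg (fun x => hg.pair m x) (fun a b => hg.pair_add_right m a b) m'

private lemma ofg_phi_zero (ofg : OddFormGroupStr hg Δ) : ofg.φ 0 = 0 :=
  addmap_zero ofg.φ ofg.φ_add

private lemma ofg_phi_neg (ofg : OddFormGroupStr hg Δ) (h : H) : ofg.φ (-h) = -ofg.φ h :=
  addmap_neg ofg.φ ofg.φ_add h

private lemma ofg_phi_bar (ofg : OddFormGroupStr hg Δ) (h : H) :
    ofg.φ (hg.bar h) = -ofg.φ h := by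
  have h0 := ofg.φ_plus_bar h
  rw [ofg.φ_add] at h0
  exact eq_neg_of_add_eq_zero_right h0

private lemma ofg_pi_zero (ofg : OddFormGroupStr hg Δ) : ofg.π 0 = 0 := by
  have := ofg.π_φ 0
  rwa [ofg_phi_zero] at this

private lemma ofg_rho_zero (ofg : OddFormGroupStr hg Δ) : ofg.ρ 0 = 0 := by
  have := ofg.ρ_φ 0
  rwa [ofg_phi_zero, hg_bar_zero, sub_zero] at this

private lemma ofg_pi_neg (ofg : OddFormGroupStr hg Δ) (u : Δ) : ofg.π (-u) = -ofg.π u := by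
  have h := ofg.π_add u (-u)
  rw [add_neg_cancel, ofg_pi_zero] at h
  exact eq_neg_of_add_eq_zero_right h.symm

private lemma ofg_rho_neg (ofg : OddFormGroupStr hg Δ) (u : Δ) :
    ofg.ρ (-u) = -ofg.ρ u - hg.pair (ofg.π u) (ofg.π u) := by
  have h := ofg.ρ_add u (-u)
  rw [add_neg_cancel, ofg_rho_zero, ofg_pi_neg, hg_pair_neg_right] at h
  -- h : 0 = ρ u - -(pair) + ρ (-u)
  have := eq_neg_of_add_eq_zero_right h.symm
  rw [this]
  abel

private lemma ofg_phi_comm (ofg : OddFormGroupStr hg Δ) (h : H) (v : Δ) :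
    ofg.φ h + v = v + ofg.φ h := by
  have hc := ofg.add_comm' (ofg.φ h) v
  rw [ofg.π_φ, hg_pair_zero_left, ofg_phi_zero, sub_zero] at hc
  exact hc

private lemma ofg_comm_phi (ofg : OddFormGroupStr hg Δ) (u v : Δ) :
    u + v = v + u - ofg.φ (hg.pair (ofg.π u) (ofg.π v)) := ofg.add_comm' u v

end AuxHerm
section AuxSq

variable {M₁ H₁ M₂ H₂ : Type} [AddCommGroup M₁] [AddCommGroup H₁]
    [AddCommGroup M₂] [AddCommGroup H₂]
    {hg₁ : HermitianGroup M₁ H₁} {hg₂ : HermitianGroup M₂ H₂}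
    {N : Type} [AddCommGroup N]

private lemma sq_beta_zero₁ (sq : SqHermStr hg₁ hg₂ N) (h : H₁) (n : N) :
    sq.β 0 h n = 0 :=
  addmap_zero (fun x => sq.β x h n) (fun a b => sq.β_add₁ a b h n)

private lemma sq_beta_zero₂ (sq : SqHermStr hg₁ hg₂ N) (n n' : N) :
    sq.β n 0 n' = 0 :=
  addmap_zero (fun x => sq.β n x n') (fun a b => sq.β_add₂ n a b n')

private lemma sq_beta_zero₃ (sq : SqHermStr hg₁ hg₂ N) (n : N) (h : H₁) :
    sq.β n h 0 = 0 :=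
  addmap_zero (fun x => sq.β n h x) (fun a b => sq.β_add₃ n h a b)

private lemma sq_beta_neg₁ (sq : SqHermStr hg₁ hg₂ N) (n : N) (h : H₁) (n' : N) :
    sq.β (-n) h n' = -sq.β n h n' :=
  addmap_neg (fun x => sq.β x h n') (fun a b => sq.β_add₁ a b h n') n

private lemma sq_beta_neg₂ (sq : SqHermStr hg₁ hg₂ N) (n : N) (h : H₁) (n' : N) :
    sq.β n (-h) n' = -sq.β n h n' :=
  addmap_neg (fun x => sq.β n x n') (fun a b => sq.β_add₂ n a b n') h

private lemma sq_beta_neg₃ (sq : SqHermStr hg₁ hg₂ N) (n : N) (h : H₁) (n' : N) :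
    sq.β n h (-n') = -sq.β n h n' :=
  addmap_neg (fun x => sq.β n h x) (fun a b => sq.β_add₃ n h a b) n'

private lemma sq_beta_sub₂ (sq : SqHermStr hg₁ hg₂ N) (n : N) (h h' : H₁) (n' : N) :
    sq.β n (h - h') n' = sq.β n h n' - sq.β n h' n' := by
  rw [sub_eq_add_neg, sq.β_add₂, sq_beta_neg₂, sub_eq_add_neg]

private lemma sq_alpha_zero_left (sq : SqHermStr hg₁ hg₂ N) (n : N) : sq.α 0 n = 0 :=
  addmap_zero (fun x => sq.α x n) (fun a b => sq.α_add_left a b n)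

private lemma sq_alpha_zero_right (sq : SqHermStr hg₁ hg₂ N) (m : M₁) : sq.α m 0 = 0 :=
  addmap_zero (fun x => sq.α m x) (fun a b => sq.α_add_right m a b)

private lemma sq_alpha_neg_left (sq : SqHermStr hg₁ hg₂ N) (m : M₁) (n : N) :
    sq.α (-m) n = -sq.α m n :=
  addmap_neg (fun x => sq.α x n) (fun a b => sq.α_add_left a b n) m

end AuxSq

section AuxSqOFG

variable {M₁ H₁ M₂ H₂ : Type} [AddCommGroup M₁] [AddCommGroup H₁]
    [AddCommGroup M₂] [AddCommGroup H₂]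
    {hg₁ : HermitianGroup M₁ H₁} {hg₂ : HermitianGroup M₂ H₂}
    {Δ₁ Δ₂ : Type} [AddGroup Δ₁] [AddGroup Δ₂]
    {ofg₁ : OddFormGroupStr hg₁ Δ₁} {ofg₂ : OddFormGroupStr hg₂ Δ₂}
    {N : Type} [AddCommGroup N]

private lemma sq_gamma_zero_right (sq : SqOFG ofg₁ ofg₂ N) (u : Δ₁) :
    sq.γ u 0 = 0 := by
  have h := sq.γ_add_right u 0 0
  rw [add_zero, sq_beta_zero₁, ofg_phi_zero, add_zero] at h
  -- h : γ u 0 = γ u 0 + γ u 0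
  exact (right_eq_add.mp h)

private lemma sq_gamma_neg_right (sq : SqOFG ofg₁ ofg₂ N) (u : Δ₁) (n : N) :
    sq.γ u (-n) = ofg₂.φ (sq.β n (ofg₁.ρ u) n) - sq.γ u n := by
  have h := sq.γ_add_right u n (-n)
  rw [add_neg_cancel, sq_gamma_zero_right, sq_beta_neg₁, ofg_phi_neg] at h
  -- h : 0 = γ u n + -φ(β n (ρ u) n) + γ u (-n)
  have h2 := eq_neg_of_add_eq_zero_right h.symm
  rw [h2, neg_add_rev, neg_neg, sub_eq_add_neg, ofg_phi_comm]

end AuxSqOFG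

section AuxSq2
variable {M₁ H₁ M₂ H₂ : Type} [AddCommGroup M₁] [AddCommGroup H₁]
    [AddCommGroup M₂] [AddCommGroup H₂]
    {hg₁ : HermitianGroup M₁ H₁} {hg₂ : HermitianGroup M₂ H₂}
    {N : Type} [AddCommGroup N]

private lemma sq_alpha_neg_right (sq : SqHermStr hg₁ hg₂ N) (m : M₁) (n : N) :
    sq.α m (-n) = -sq.α m n :=
  addmap_neg (fun x => sq.α m x) (fun a b => sq.α_add_right m a b) n
end AuxSq2
section Grind

variable {G : Type} [AddGroup G]

private lemma swap3 {b c : G} (h : b + c = c + b) (a : G) : a + b + c = a + c + b := by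
  rw [add_assoc, h, ← add_assoc]

private lemma neg_central {s : G} (hs : ∀ x, s + x = x + s) (x : G) :
    -s + x = x + -s := by
  have h : AddCommute s x := hs x
  exact h.neg_left.eq

private lemma grind1 (A B C D p s q : G)
    (hp : ∀ x, p + x = x + p) (hs : ∀ x, s + x = x + s) (hq : ∀ x, q + x = x + q)
    (hcomm : B + C = C + B - s) :
    (A + B) + (p + s + q) + (C + D) = (A + p + C) + (B + q + D) := by
  have hCB : A + B + C = A + C + B + -s := by
    rw [add_assoc A B C, hcomm, sub_eq_add_neg, ← add_assoc, ← add_assoc]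
  calc (A + B) + (p + s + q) + (C + D)
      = A + B + p + s + q + C + D := by simp only [add_assoc]
    _ = A + B + p + s + C + q + D := by rw [swap3 (hq C) (A + B + p + s)]
    _ = A + B + p + C + s + q + D := by rw [swap3 (hs C) (A + B + p)]
    _ = A + B + C + p + s + q + D := by rw [swap3 (hp C) (A + B)]
    _ = A + C + B + -s + p + s + q + D := by rw [hCB]
    _ = A + C + B + p + -s + s + q + D := by rw [swap3 ((neg_central hs p).symm) (A + C + B)]
    _ = A + C + B + p + q + D := by
          rw [add_assoc (A + C + B + p) (-s) s, neg_add_cancel, add_zero]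
    _ = A + C + p + B + q + D := by rw [swap3 ((hp B).symm) (A + C)]
    _ = A + p + C + B + q + D := by rw [swap3 ((hp C).symm) A]
    _ = (A + p + C) + (B + q + D) := by simp only [add_assoc]

private lemma grind2 (A B p t q : G)
    (hp : ∀ x, p + x = x + p) (ht : ∀ x, t + x = x + t) (hq : ∀ x, q + x = x + q)
    (hswap : -B + -A = -A + -B - t) :
    (p + t + q) + -(A + B) = (p + -A) + (q + -B) := by
  have key : -B + -A + t = -A + -B := by
    rw [hswap, sub_eq_add_neg, add_assoc, neg_add_cancel, add_zero]
  calc (p + t + q) + -(A + B)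
      = p + t + q + (-B + -A) := by rw [neg_add_rev]
    _ = p + t + q + -B + -A := by rw [← add_assoc]
    _ = p + t + -B + q + -A := by rw [swap3 ((hq (-B)).symm) (p + t)]
    _ = p + -B + t + q + -A := by rw [swap3 ((ht (-B)).symm) p]
    _ = p + -B + t + -A + q := by rw [swap3 ((hq (-A)).symm) (p + -B + t)]
    _ = p + -B + -A + t + q := by rw [swap3 ((ht (-A)).symm) (p + -B)]
    _ = p + (-B + -A + t) + q := by simp only [add_assoc]
    _ = p + (-A + -B) + q := by rw [key]
    _ = p + -A + (-B + q) := by simp only [add_assoc]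
    _ = p + -A + (q + -B) := by rw [(hq (-B)).symm]
section Construction

variable {M₁ H₁ M₂ H₂ M₃ H₃ M₄ H₄ Δ₁ Δ₂ Δ₃ Δ₄ : Type}
    {A₁₂ A₁₃ A₁₄ A₂₃ A₂₄ A₃₄ : Type}
    [AddCommGroup M₁] [AddCommGroup H₁] [AddCommGroup M₂] [AddCommGroup H₂]
    [AddCommGroup M₃] [AddCommGroup H₃] [AddCommGroup M₄] [AddCommGroup H₄]
    [AddGroup Δ₁] [AddGroup Δ₂] [AddGroup Δ₃] [AddGroup Δ₄]
    [AddCommGroup A₁₂] [AddCommGroup A₁₃] [AddCommGroup A₁₄]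
    [AddCommGroup A₂₃] [AddCommGroup A₂₄] [AddCommGroup A₃₄]
    {hg₁ : HermitianGroup M₁ H₁} {hg₂ : HermitianGroup M₂ H₂}
    {hg₃ : HermitianGroup M₃ H₃} {hg₄ : HermitianGroup M₄ H₄}
    {ofg₁ : OddFormGroupStr hg₁ Δ₁} {ofg₂ : OddFormGroupStr hg₂ Δ₂}
    {ofg₃ : OddFormGroupStr hg₃ Δ₃} {ofg₄ : OddFormGroupStr hg₄ Δ₄}

/-- `g` behaves like `γ₂₄ (·, n)` should. -/
private def IsGam (μ₁₂₄ : A₁₂ → A₂₄ → A₁₄)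
    (sq₁₂ : SqOFG ofg₁ ofg₂ A₁₂) (sq₁₄ : SqOFG ofg₁ ofg₄ A₁₄)
    (sq₂₄ : SqHermStr hg₂ hg₄ A₂₄) (n : A₂₄) (g : Δ₂ → Δ₄) : Prop :=
  (∀ u u', g (u + u') = g u + g u') ∧
  (∀ h, g (ofg₂.φ h) = ofg₄.φ (sq₂₄.β n h n)) ∧
  (∀ v a, g (sq₁₂.γ v a) = sq₁₄.γ v (μ₁₂₄ a n)) ∧
  (∀ u, ofg₄.π (g u) = sq₂₄.α (ofg₂.π u) n) ∧
  (∀ u, ofg₄.ρ (g u) = sq₂₄.β n (ofg₂.ρ u) n)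

variable {μ₁₂₃ : A₁₂ → A₂₃ → A₁₃} {μ₁₂₄ : A₁₂ → A₂₄ → A₁₄}
    {μ₁₃₄ : A₁₃ → A₃₄ → A₁₄} {μ₂₃₄ : A₂₃ → A₃₄ → A₂₄}
    {sq₁₂ : SqOFG ofg₁ ofg₂ A₁₂} {sq₁₃ : SqOFG ofg₁ ofg₃ A₁₃}
    {sq₁₄ : SqOFG ofg₁ ofg₄ A₁₄} {sq₂₃ : SqOFG ofg₂ ofg₃ A₂₃}
    {sq₃₄ : SqOFG ofg₃ ofg₄ A₃₄}
    {sq₂₄ : SqHermStr hg₂ hg₄ A₂₄}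

private lemma isgam_unique
    (hgen : AddSubgroup.closure
      (Set.range ofg₂.φ ∪ {x | ∃ u a, x = sq₁₂.γ u a}) = ⊤)
    {n : A₂₄} {g g' : Δ₂ → Δ₄}
    (hg : IsGam μ₁₂₄ sq₁₂ sq₁₄ sq₂₄ n g) (hg' : IsGam μ₁₂₄ sq₁₂ sq₁₄ sq₂₄ n g') :
    g = g' := by
  obtain ⟨hadd, hφ, hγ, -, -⟩ := hg
  obtain ⟨hadd', hφ', hγ', -, -⟩ := hg'
  funext u
  have hu : u ∈ AddSubgroup.closure
      (Set.range ofg₂.φ ∪ {x | ∃ u a, x = sq₁₂.γ u a}) := by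
    rw [hgen]; trivial
  refine AddSubgroup.closure_induction ?_ ?_ ?_ ?_ hu
  · rintro x (⟨h, rfl⟩ | ⟨v, a, rfl⟩)
    · rw [hφ, hφ']
    · rw [hγ, hγ']
  · rw [addmap_zero g hadd, addmap_zero g' hadd']
  · intro x y _ _ ihx ihy
    rw [hadd, hadd', ihx, ihy]
  · intro x _ ihx
    rw [addmap_neg g hadd, addmap_neg g' hadd', ihx]

private lemma isgam_gen
    (hμassoc : ∀ a b c, μ₁₃₄ (μ₁₂₃ a b) c = μ₁₂₄ a (μ₂₃₄ b c))
    (h123γ : ∀ u a b, sq₂₃.γ (sq₁₂.γ u a) b = sq₁₃.γ u (μ₁₂₃ a b))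
    (h134γ : ∀ u a b, sq₃₄.γ (sq₁₃.γ u a) b = sq₁₄.γ u (μ₁₃₄ a b))
    (h234α : ∀ m a b, sq₃₄.α (sq₂₃.α m a) b = sq₂₄.α m (μ₂₃₄ a b))
    (h234β : ∀ a b h a' b', sq₃₄.β b (sq₂₃.β a h a') b' = sq₂₄.β (μ₂₃₄ a b) h (μ₂₃₄ a' b'))
    (b : A₂₃) (c : A₃₄) :
    IsGam μ₁₂₄ sq₁₂ sq₁₄ sq₂₄ (μ₂₃₄ b c) (fun u => sq₃₄.γ (sq₂₃.γ u b) c) := by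
  refine ⟨?_, ?_, ?_, ?_, ?_⟩
  · intro u u'; simp only [sq₂₃.γ_add, sq₃₄.γ_add]
  · intro h; simp only [sq₂₃.γ_φ, sq₃₄.γ_φ, h234β]
  · intro v a; simp only [h123γ, h134γ, hμassoc]
  · intro u; simp only [sq₃₄.π_γ, sq₂₃.π_γ, h234α]
  · intro u; simp only [sq₃₄.ρ_γ, sq₂₃.ρ_γ, h234β]

private lemma isgam_zero
    (hμ₁₂₄r : ∀ a b b', μ₁₂₄ a (b + b') = μ₁₂₄ a b + μ₁₂₄ a b') :
    IsGam μ₁₂₄ sq₁₂ sq₁₄ sq₂₄ 0 (fun _ => (0 : Δ₄)) := by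
  refine ⟨?_, ?_, ?_, ?_, ?_⟩
  · intro u u'; rw [add_zero]
  · intro h; rw [sq_beta_zero₁, ofg_phi_zero]
  · intro v a
    rw [addmap_zero (fun x => μ₁₂₄ a x) (fun x y => hμ₁₂₄r a x y), sq_gamma_zero_right]
  · intro u; rw [ofg_pi_zero, sq_alpha_zero_right]
  · intro u; rw [ofg_rho_zero, sq_beta_zero₁]

end Construction
section Construction2

variable {M₁ H₁ M₂ H₂ M₃ H₃ M₄ H₄ Δ₁ Δ₂ Δ₃ Δ₄ : Type}
    {A₁₂ A₁₃ A₁₄ A₂₃ A₂₄ A₃₄ : Type}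
    [AddCommGroup M₁] [AddCommGroup H₁] [AddCommGroup M₂] [AddCommGroup H₂]
    [AddCommGroup M₃] [AddCommGroup H₃] [AddCommGroup M₄] [AddCommGroup H₄]
    [AddGroup Δ₁] [AddGroup Δ₂] [AddGroup Δ₃] [AddGroup Δ₄]
    [AddCommGroup A₁₂] [AddCommGroup A₁₃] [AddCommGroup A₁₄]
    [AddCommGroup A₂₃] [AddCommGroup A₂₄] [AddCommGroup A₃₄]
    {hg₁ : HermitianGroup M₁ H₁} {hg₂ : HermitianGroup M₂ H₂}
    {hg₃ : HermitianGroup M₃ H₃} {hg₄ : HermitianGroup M₄ H₄}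
    {ofg₁ : OddFormGroupStr hg₁ Δ₁} {ofg₂ : OddFormGroupStr hg₂ Δ₂}
    {ofg₃ : OddFormGroupStr hg₃ Δ₃} {ofg₄ : OddFormGroupStr hg₄ Δ₄}
    {μ₁₂₄ : A₁₂ → A₂₄ → A₁₄}
    {sq₁₂ : SqOFG ofg₁ ofg₂ A₁₂} {sq₁₄ : SqOFG ofg₁ ofg₄ A₁₄}
    {sq₂₄ : SqHermStr hg₂ hg₄ A₂₄}

private lemma bar_rho {u : Δ₂} :
    hg₂.bar (ofg₂.ρ u) = -(ofg₂.ρ u + hg₂.pair (ofg₂.π u) (ofg₂.π u)) :=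
  eq_neg_of_add_eq_zero_right (ofg₂.ρ_bar u)

private lemma isgam_add
    (hμ₁₂₄r : ∀ a b b', μ₁₂₄ a (b + b') = μ₁₂₄ a b + μ₁₂₄ a b')
    (h124β : ∀ a b h a' b', sq₂₄.β b (sq₁₂.β a h a') b' = sq₁₄.β (μ₁₂₄ a b) h (μ₁₂₄ a' b'))
    {n n' : A₂₄} {g g' : Δ₂ → Δ₄}
    (hg : IsGam μ₁₂₄ sq₁₂ sq₁₄ sq₂₄ n g) (hg' : IsGam μ₁₂₄ sq₁₂ sq₁₄ sq₂₄ n' g') :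
    IsGam μ₁₂₄ sq₁₂ sq₁₄ sq₂₄ (n + n')
      (fun u => g u + ofg₄.φ (sq₂₄.β n' (ofg₂.ρ u) n) + g' u) := by
  obtain ⟨hadd, hφ, hγ, hπ, hρ⟩ := hg
  obtain ⟨hadd', hφ', hγ', hπ', hρ'⟩ := hg'
  refine ⟨?_, ?_, ?_, ?_, ?_⟩
  · -- additivity
    intro u u'
    show g (u + u') + ofg₄.φ (sq₂₄.β n' (ofg₂.ρ (u + u')) n) + g' (u + u') = _
    rw [hadd, hadd', ofg₂.ρ_add, sq₂₄.β_add₂, sq_beta_sub₂, ofg₄.φ_add,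
      sub_eq_add_neg, ofg₄.φ_add, ofg_phi_neg, ← ofg_phi_bar ofg₄, sq₂₄.bar_β,
      hg₂.bar_pair]
    have hcomm : g u' + g' u = g' u + g u' -
        ofg₄.φ (sq₂₄.β n (hg₂.pair (ofg₂.π u') (ofg₂.π u)) n') := by
      have h0 := ofg₄.add_comm' (g u') (g' u)
      rwa [hπ, hπ', sq₂₄.pair_α] at h0
    exact grind1 _ _ _ _ _ _ _ (fun x => ofg_phi_comm ofg₄ _ x)
      (fun x => ofg_phi_comm ofg₄ _ x) (fun x => ofg_phi_comm ofg₄ _ x) hcomm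
  · -- φ
    intro h
    show g (ofg₂.φ h) + ofg₄.φ (sq₂₄.β n' (ofg₂.ρ (ofg₂.φ h)) n) + g' (ofg₂.φ h) = _
    rw [hφ, hφ', ofg₂.ρ_φ, sq_beta_sub₂, sub_eq_add_neg, ofg₄.φ_add, ofg_phi_neg,
      ← ofg_phi_bar ofg₄, sq₂₄.bar_β, hg₂.bar_bar, sq₂₄.β_add₁, sq₂₄.β_add₃,
      sq₂₄.β_add₃, ofg₄.φ_add, ofg₄.φ_add, ofg₄.φ_add]
    simp only [← ofg₄.φ_add]
    congr 1
    abel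
  · -- γ
    intro v a
    show g (sq₁₂.γ v a) + ofg₄.φ (sq₂₄.β n' (ofg₂.ρ (sq₁₂.γ v a)) n) + g' (sq₁₂.γ v a) = _
    rw [hγ, hγ', sq₁₂.ρ_γ, h124β, hμ₁₂₄r, sq₁₄.γ_add_right]
  · -- π
    intro u
    show ofg₄.π (g u + ofg₄.φ (sq₂₄.β n' (ofg₂.ρ u) n) + g' u) = _
    rw [ofg₄.π_add, ofg₄.π_add, ofg₄.π_φ, add_zero, hπ, hπ', ← sq₂₄.α_add_right]
  · -- ρ
    intro u
    show ofg₄.ρ (g u + ofg₄.φ (sq₂₄.β n' (ofg₂.ρ u) n) + g' u) = _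
    rw [ofg₄.ρ_add, ofg₄.ρ_add, ofg₄.π_add, ofg₄.π_φ, add_zero, ofg₄.ρ_φ,
      hρ, hρ', hπ, hπ', sq₂₄.pair_α, hg_pair_zero_right, sub_zero, sq₂₄.bar_β,
      bar_rho, sq_beta_neg₂, sq₂₄.β_add₂, sq₂₄.β_add₁, sq₂₄.β_add₃, sq₂₄.β_add₃]
    abel

private lemma isgam_neg
    (hμ₁₂₄r : ∀ a b b', μ₁₂₄ a (b + b') = μ₁₂₄ a b + μ₁₂₄ a b')
    (h124β : ∀ a b h a' b', sq₂₄.β b (sq₁₂.β a h a') b' = sq₁₄.β (μ₁₂₄ a b) h (μ₁₂₄ a' b'))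
    {n : A₂₄} {g : Δ₂ → Δ₄}
    (hg : IsGam μ₁₂₄ sq₁₂ sq₁₄ sq₂₄ n g) :
    IsGam μ₁₂₄ sq₁₂ sq₁₄ sq₂₄ (-n)
      (fun u => ofg₄.φ (sq₂₄.β n (ofg₂.ρ u) n) - g u) := by
  obtain ⟨hadd, hφ, hγ, hπ, hρ⟩ := hg
  refine ⟨?_, ?_, ?_, ?_, ?_⟩
  · -- additivity
    intro u u'
    show ofg₄.φ (sq₂₄.β n (ofg₂.ρ (u + u')) n) - g (u + u') = _
    rw [hadd, ofg₂.ρ_add, sq₂₄.β_add₂, sq_beta_sub₂, ofg₄.φ_add,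
      sub_eq_add_neg (sq₂₄.β n (ofg₂.ρ u) n), ofg₄.φ_add, ofg_phi_neg]
    have h2 : -ofg₄.φ (sq₂₄.β n (hg₂.pair (ofg₂.π u') (ofg₂.π u)) n) =
        ofg₄.φ (sq₂₄.β n (hg₂.pair (ofg₂.π u) (ofg₂.π u')) n) := by
      rw [← ofg_phi_bar ofg₄, sq₂₄.bar_β, hg₂.bar_pair]
    have hswap : -(g u') + -(g u) = -(g u) + -(g u') -
        -ofg₄.φ (sq₂₄.β n (hg₂.pair (ofg₂.π u) (ofg₂.π u')) n) := by
      have h1 := ofg₄.add_comm' (-(g u')) (-(g u))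
      rw [ofg_pi_neg, ofg_pi_neg, hπ, hπ, hg_pair_neg_left, hg_pair_neg_right,
        neg_neg, sq₂₄.pair_α] at h1
      rw [h1, ← h2, neg_neg]
    simp only [sub_eq_add_neg]
    exact grind2 _ _ _ _ _ (fun x => ofg_phi_comm ofg₄ _ x)
      (neg_central (fun x => ofg_phi_comm ofg₄ _ x))
      (fun x => ofg_phi_comm ofg₄ _ x) hswap
  · -- φ
    intro h
    show ofg₄.φ (sq₂₄.β n (ofg₂.ρ (ofg₂.φ h)) n) - g (ofg₂.φ h) = _
    rw [hφ, ofg₂.ρ_φ, sq_beta_sub₂, sq_beta_neg₁, sq_beta_neg₃, neg_neg]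
    simp only [sub_eq_add_neg]
    rw [ofg₄.φ_add, ofg_phi_neg, ← sq₂₄.bar_β, ofg_phi_bar, neg_neg,
      add_neg_cancel_right]
  · -- γ
    intro v a
    show ofg₄.φ (sq₂₄.β n (ofg₂.ρ (sq₁₂.γ v a)) n) - g (sq₁₂.γ v a) = _
    have hm : μ₁₂₄ a (-n) = -(μ₁₂₄ a n) :=
      addmap_neg (fun x => μ₁₂₄ a x) (fun x y => hμ₁₂₄r a x y) n
    rw [hγ, sq₁₂.ρ_γ, h124β, hm, sq_gamma_neg_right]
  · -- π
    intro u
    show ofg₄.π (ofg₄.φ (sq₂₄.β n (ofg₂.ρ u) n) - g u) = _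
    rw [sub_eq_add_neg, ofg₄.π_add, ofg₄.π_φ, zero_add, ofg_pi_neg, hπ,
      sq_alpha_neg_right]
  · -- ρ
    intro u
    show ofg₄.ρ (ofg₄.φ (sq₂₄.β n (ofg₂.ρ u) n) - g u) = _
    rw [sub_eq_add_neg, ofg₄.ρ_add, ofg₄.ρ_φ, ofg₄.π_φ, hg_pair_zero_left,
      sub_zero, ofg_rho_neg, hρ, hπ, sq₂₄.pair_α, sq₂₄.bar_β, bar_rho,
      sq_beta_neg₂, sq₂₄.β_add₂, sq_beta_neg₁, sq_beta_neg₃, neg_neg]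
    abel

end Construction2
/-- Lemma `act-cons`. -/
theorem statement14 {M₁ H₁ M₂ H₂ M₃ H₃ M₄ H₄ Δ₁ Δ₂ Δ₃ Δ₄ : Type}
    {A₁₂ A₁₃ A₁₄ A₂₃ A₂₄ A₃₄ : Type}
    [AddCommGroup M₁] [AddCommGroup H₁] [AddCommGroup M₂] [AddCommGroup H₂]
    [AddCommGroup M₃] [AddCommGroup H₃] [AddCommGroup M₄] [AddCommGroup H₄]
    [AddGroup Δ₁] [AddGroup Δ₂] [AddGroup Δ₃] [AddGroup Δ₄]
    [AddCommGroup A₁₂] [AddCommGroup A₁₃] [AddCommGroup A₁₄]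
    [AddCommGroup A₂₃] [AddCommGroup A₂₄] [AddCommGroup A₃₄]
    {hg₁ : HermitianGroup M₁ H₁} {hg₂ : HermitianGroup M₂ H₂}
    {hg₃ : HermitianGroup M₃ H₃} {hg₄ : HermitianGroup M₄ H₄}
    {ofg₁ : OddFormGroupStr hg₁ Δ₁} {ofg₂ : OddFormGroupStr hg₂ Δ₂}
    {ofg₃ : OddFormGroupStr hg₃ Δ₃} {ofg₄ : OddFormGroupStr hg₄ Δ₄}
    -- biadditive multiplication maps
    (μ₁₂₃ : A₁₂ → A₂₃ → A₁₃) (μ₁₂₄ : A₁₂ → A₂₄ → A₁₄)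
    (μ₁₃₄ : A₁₃ → A₃₄ → A₁₄) (μ₂₃₄ : A₂₃ → A₃₄ → A₂₄)
    (hμ₁₂₃l : ∀ a a' b, μ₁₂₃ (a + a') b = μ₁₂₃ a b + μ₁₂₃ a' b)
    (hμ₁₂₃r : ∀ a b b', μ₁₂₃ a (b + b') = μ₁₂₃ a b + μ₁₂₃ a b')
    (hμ₁₂₄l : ∀ a a' b, μ₁₂₄ (a + a') b = μ₁₂₄ a b + μ₁₂₄ a' b)
    (hμ₁₂₄r : ∀ a b b', μ₁₂₄ a (b + b') = μ₁₂₄ a b + μ₁₂₄ a b')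
    (hμ₁₃₄l : ∀ a a' b, μ₁₃₄ (a + a') b = μ₁₃₄ a b + μ₁₃₄ a' b)
    (hμ₁₃₄r : ∀ a b b', μ₁₃₄ a (b + b') = μ₁₃₄ a b + μ₁₃₄ a b')
    (hμ₂₃₄l : ∀ a a' b, μ₂₃₄ (a + a') b = μ₂₃₄ a b + μ₂₃₄ a' b)
    (hμ₂₃₄r : ∀ a b b', μ₂₃₄ a (b + b') = μ₂₃₄ a b + μ₂₃₄ a b')
    -- sesquiquadratic maps, with only a hermitian-level map for (2,4)
    (sq₁₂ : SqOFG ofg₁ ofg₂ A₁₂) (sq₁₃ : SqOFG ofg₁ ofg₃ A₁₃)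
    (sq₁₄ : SqOFG ofg₁ ofg₄ A₁₄) (sq₂₃ : SqOFG ofg₂ ofg₃ A₂₃)
    (sq₃₄ : SqOFG ofg₃ ofg₄ A₃₄)
    (sq₂₄ : SqHermStr hg₂ hg₄ A₂₄)
    -- Δ₂ is generated by the image of γ₁₂ (together with φ(H₂))
    (hgen : AddSubgroup.closure
      (Set.range ofg₂.φ ∪ {x | ∃ u a, x = sq₁₂.γ u a}) = ⊤)
    -- A₂₄ is generated by the products μ₂₃₄(b, c)
    (hgenA : AddSubgroup.closure {x : A₂₄ | ∃ b c, x = μ₂₃₄ b c} = ⊤)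
    -- associativity of the multiplications
    (hμassoc : ∀ a b c, μ₁₃₄ (μ₁₂₃ a b) c = μ₁₂₄ a (μ₂₃₄ b c))
    -- associative law for the triple (1,2,3)
    (h123α : ∀ m a b, sq₂₃.α (sq₁₂.α m a) b = sq₁₃.α m (μ₁₂₃ a b))
    (h123β : ∀ a b h a' b', sq₂₃.β b (sq₁₂.β a h a') b' = sq₁₃.β (μ₁₂₃ a b) h (μ₁₂₃ a' b'))
    (h123γ : ∀ u a b, sq₂₃.γ (sq₁₂.γ u a) b = sq₁₃.γ u (μ₁₂₃ a b))
    -- associative law for the triple (1,3,4)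
    (h134α : ∀ m a b, sq₃₄.α (sq₁₃.α m a) b = sq₁₄.α m (μ₁₃₄ a b))
    (h134β : ∀ a b h a' b', sq₃₄.β b (sq₁₃.β a h a') b' = sq₁₄.β (μ₁₃₄ a b) h (μ₁₃₄ a' b'))
    (h134γ : ∀ u a b, sq₃₄.γ (sq₁₃.γ u a) b = sq₁₄.γ u (μ₁₃₄ a b))
    -- hermitian-level associative law for the triple (1,2,4)
    (h124α : ∀ m a b, sq₂₄.α (sq₁₂.α m a) b = sq₁₄.α m (μ₁₂₄ a b))
    (h124β : ∀ a b h a' b', sq₂₄.β b (sq₁₂.β a h a') b' = sq₁₄.β (μ₁₂₄ a b) h (μ₁₂₄ a' b'))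
    -- hermitian-level associative law for the triple (2,3,4)
    (h234α : ∀ m a b, sq₃₄.α (sq₂₃.α m a) b = sq₂₄.α m (μ₂₃₄ a b))
    (h234β : ∀ a b h a' b', sq₃₄.β b (sq₂₃.β a h a') b' = sq₂₄.β (μ₂₃₄ a b) h (μ₂₃₄ a' b')) :
    ∃! γ₂₄ : Δ₂ → A₂₄ → Δ₄,
      ((∀ u n, ofg₄.π (γ₂₄ u n) = sq₂₄.α (ofg₂.π u) n) ∧
       (∀ h n, γ₂₄ (ofg₂.φ h) n = ofg₄.φ (sq₂₄.β n h n)) ∧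
       (∀ u u' n, γ₂₄ (u + u') n = γ₂₄ u n + γ₂₄ u' n) ∧
       (∀ u n, ofg₄.ρ (γ₂₄ u n) = sq₂₄.β n (ofg₂.ρ u) n) ∧
       (∀ u n n', γ₂₄ u (n + n') = γ₂₄ u n + ofg₄.φ (sq₂₄.β n' (ofg₂.ρ u) n) + γ₂₄ u n')) ∧
      (∀ u a b, γ₂₄ (sq₁₂.γ u a) b = sq₁₄.γ u (μ₁₂₄ a b)) ∧
      (∀ u a b, sq₃₄.γ (sq₂₃.γ u a) b = γ₂₄ u (μ₂₃₄ a b)) := by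
  classical
  have exg : ∀ n : A₂₄, ∃ g : Δ₂ → Δ₄, IsGam μ₁₂₄ sq₁₂ sq₁₄ sq₂₄ n g := by
    intro n
    have hn : n ∈ AddSubgroup.closure {x : A₂₄ | ∃ b c, x = μ₂₃₄ b c} := by
      rw [hgenA]; trivial
    refine AddSubgroup.closure_induction
      (p := fun x _ => ∃ g, IsGam μ₁₂₄ sq₁₂ sq₁₄ sq₂₄ x g) ?_ ?_ ?_ ?_ hn
    · rintro x ⟨b, c, rfl⟩
      exact ⟨_, isgam_gen hμassoc h123γ h134γ h234α h234β b c⟩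
    · exact ⟨_, isgam_zero hμ₁₂₄r⟩
    · rintro x y - - ⟨g, hg⟩ ⟨g', hg'⟩
      exact ⟨_, isgam_add hμ₁₂₄r h124β hg hg'⟩
    · rintro x - ⟨g, hg⟩
      exact ⟨_, isgam_neg hμ₁₂₄r h124β hg⟩
  choose G hG using exg
  refine ⟨fun u n => G n u, ⟨⟨?_, ?_, ?_, ?_, ?_⟩, ?_, ?_⟩, ?_⟩
  · exact fun u n => (hG n).2.2.2.1 u
  · exact fun h n => (hG n).2.1 h
  · exact fun u u' n => (hG n).1 u u'
  · exact fun u n => (hG n).2.2.2.2 u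
  · intro u n n'
    have hK := isgam_add hμ₁₂₄r h124β (hG n) (hG n')
    exact congrFun (isgam_unique hgen (hG (n + n')) hK) u
  · exact fun u a b => (hG b).2.2.1 u a
  · intro u a b
    have hF := isgam_gen hμassoc h123γ h134γ h234α h234β a b
    exact (congrFun (isgam_unique hgen (hG (μ₂₃₄ a b)) hF) u).symm
  · rintro γ' ⟨⟨hπ', hφ', hadd', hρ', hco'⟩, hlaw2', hlaw3'⟩
    funext u n
    have hγ' : IsGam μ₁₂₄ sq₁₂ sq₁₄ sq₂₄ n (fun u => γ' u n) :=
      ⟨fun u u' => hadd' u u' n, fun h => hφ' h n, fun v a => hlaw2' v a n,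
        fun u => hπ' u n, fun u => hρ' u n⟩
    exact congrFun (isgam_unique hgen hγ' (hG n)) u
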